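/- Let 0 < p ≤ 1, let X be a p-Banach space over 𝔽 = ℝ or ℂ, and let 𝒳 be a basis of X. Suppose there is C > 0 such that ‖f − P_A(f)‖ ≤ C·‖f − (min_{n∈A}|x_n^*(f)|)·𝟙_B‖ for all f ∈ X, all greedy sets A of f, and all B ⊂ ℕ with |B| = |A| and either A < B or B < A. Then for every finite nonempty set A ⊂ ℕ, every sign ε on A, and every f ∈ X such that |{n ∈ supp(f) : |x_n^*(f)| ≥ 1}| ≥ |A|, one has ‖𝟙_{ε,A}‖ ≤ 2^{1/p − 1}·B_p·C²·‖f‖. In particular, 𝒳 is superdemocratic with superdemocracy constant at most 2^{1/p − 1}·B_p·C². -/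

import Mathlib

open scoped BigOperators

noncomputable section

/-- A basis of a `p`-Banach space over `𝕜` (`𝕜 = ℝ` or `ℂ`), bundled with the `p`-norm
`N`, the basis vectors `e`, and the biorthogonal functionals `coord`. -/
structure PBasis (𝕜 : Type*) [RCLike 𝕜] (X : Type*) [AddCommGroup X] [Module 𝕜 X]
    (p : ℝ) : Type _ where
  /-- the `p`-norm of the space -/
  N : X → ℝ
  N_nonneg : ∀ f : X, 0 ≤ N f
  N_eq_zero_iff : ∀ f : X, N f = 0 ↔ f = 0
  N_smul : ∀ (t : 𝕜) (f : X), N (t • f) = ‖t‖ * N f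
  N_padd : ∀ f g : X, N (f + g) ^ p ≤ N f ^ p + N g ^ p
  /-- completeness with respect to the `p`-norm -/
  complete : ∀ u : ℕ → X,
      (∀ ε : ℝ, 0 < ε → ∃ n₀ : ℕ, ∀ m n : ℕ, n₀ ≤ m → n₀ ≤ n → N (u m - u n) < ε) →
      ∃ f : X, ∀ ε : ℝ, 0 < ε → ∃ n₀ : ℕ, ∀ n : ℕ, n₀ ≤ n → N (u n - f) < ε
  /-- the basis vectors -/
  e : ℕ → X
  /-- the biorthogonal functionals -/
  coord : ℕ → X →ₗ[𝕜] 𝕜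
  biorth : ∀ n m : ℕ, coord n (e m) = if n = m then (1 : 𝕜) else 0
  /-- the closed linear span of the basis vectors is the whole space -/
  dense_span : ∀ f : X, ∀ ε : ℝ, 0 < ε →
      ∃ g ∈ Submodule.span 𝕜 (Set.range e), N (f - g) < ε
  e_bdd : ∃ c : ℝ, ∀ n : ℕ, N (e n) ≤ c
  coord_bdd : ∃ c : ℝ, ∀ (n : ℕ) (f : X), ‖coord n f‖ ≤ c * N f

namespace PBasis

variable {𝕜 : Type*} [RCLike 𝕜] {X : Type*} [AddCommGroup X] [Module 𝕜 X] {p : ℝ}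

/-- The projection `P_A f = ∑_{n ∈ A} x_n^*(f) x_n`. -/
def proj (bs : PBasis 𝕜 X p) (A : Finset ℕ) (f : X) : X :=
  ∑ n ∈ A, bs.coord n f • bs.e n

/-- The support of `f`. -/
def supp (bs : PBasis 𝕜 X p) (f : X) : Set ℕ := {n | bs.coord n f ≠ 0}

/-- `A` is a greedy set of `f`: `min_{n ∈ A} |x_n^*(f)| ≥ max_{m ∉ A} |x_m^*(f)|`. -/
def IsGreedySet (bs : PBasis 𝕜 X p) (f : X) (A : Finset ℕ) : Prop :=
  ∀ n ∈ A, ∀ m : ℕ, m ∉ A → ‖bs.coord m f‖ ≤ ‖bs.coord n f‖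

/-- `𝟙_{ε,A} = ∑_{j ∈ A} ε_j x_j`. -/
def indSign (bs : PBasis 𝕜 X p) (ε : ℕ → 𝕜) (A : Finset ℕ) : X :=
  ∑ j ∈ A, ε j • bs.e j

/-- `𝟙_A = ∑_{j ∈ A} x_j`. -/
def ind (bs : PBasis 𝕜 X p) (A : Finset ℕ) : X := ∑ j ∈ A, bs.e j

/-- `ε` is a sign on `A`. -/
def IsSign (ε : ℕ → 𝕜) (A : Finset ℕ) : Prop := ∀ j ∈ A, ‖ε j‖ = 1

/-- `min_{n ∈ A} |x_n^*(f)|`. -/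
def minCoef (bs : PBasis 𝕜 X p) (f : X) (A : Finset ℕ) : ℝ :=
  sInf ((fun n => ‖bs.coord n f‖) '' (A : Set ℕ))

/-- `‖f − P_A(f)‖ ≤ C·σ_m(f)` for every greedy set `A` of cardinality `m`. -/
def IsGreedyWith (bs : PBasis 𝕜 X p) (C : ℝ) : Prop :=
  ∀ (f : X) (A B : Finset ℕ) (a : ℕ → 𝕜), bs.IsGreedySet f A → B.card ≤ A.card →
    bs.N (f - bs.proj A f) ≤ C * bs.N (f - ∑ j ∈ B, a j • bs.e j)

/-- `‖f − P_A(f)‖ ≤ C·ρ_m(f)` for every greedy set `A` of cardinality `m`, where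
`ρ_m(f) = inf {‖f − α 𝟙_{ε,B}‖ : |B| = m, ε sign}` and `α = min_{n ∈ A} |x_n^*(f)|`. -/
def IsRGPCCWith (bs : PBasis 𝕜 X p) (C : ℝ) : Prop :=
  ∀ (f : X) (A B : Finset ℕ) (ε : ℕ → 𝕜), bs.IsGreedySet f A → B.card = A.card →
    IsSign ε B →
    bs.N (f - bs.proj A f) ≤ C * bs.N (f - ((bs.minCoef f A : ℝ) : 𝕜) • bs.indSign ε B)

/-- `‖f − P_A(f)‖ ≤ C·ϱ_m(f)` for every greedy set `A` of cardinality `m`, where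
`ϱ_m(f) = inf {‖f − α 𝟙_B‖ : |B| = m}` and `α = min_{n ∈ A} |x_n^*(f)|`. -/
def IsURGPCCWith (bs : PBasis 𝕜 X p) (C : ℝ) : Prop :=
  ∀ (f : X) (A B : Finset ℕ), bs.IsGreedySet f A → B.card = A.card →
    bs.N (f - bs.proj A f) ≤ C * bs.N (f - ((bs.minCoef f A : ℝ) : 𝕜) • bs.ind B)

/-- `K`-unconditionality. -/
def IsUncondWith (bs : PBasis 𝕜 X p) (K : ℝ) : Prop :=
  ∀ (A : Finset ℕ) (f : X), bs.N (bs.proj A f) ≤ K * bs.N f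

/-- `C`-quasi-greediness. -/
def IsQuasiGreedyWith (bs : PBasis 𝕜 X p) (C : ℝ) : Prop :=
  ∀ (f : X) (A : Finset ℕ), bs.IsGreedySet f A → bs.N (f - bs.proj A f) ≤ C * bs.N f

/-- `C`-almost-greediness. -/
def IsAlmostGreedyWith (bs : PBasis 𝕜 X p) (C : ℝ) : Prop :=
  ∀ (f : X) (A B : Finset ℕ), bs.IsGreedySet f A → B.card ≤ A.card →
    bs.N (f - bs.proj A f) ≤ C * bs.N (f - bs.proj B f)

/-- `D`-democracy. -/
def IsDemocraticWith (bs : PBasis 𝕜 X p) (D : ℝ) : Prop :=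
  ∀ A B : Finset ℕ, A.card ≤ B.card → bs.N (bs.ind A) ≤ D * bs.N (bs.ind B)

/-- `D`-superdemocracy. -/
def IsSuperdemocraticWith (bs : PBasis 𝕜 X p) (D : ℝ) : Prop :=
  ∀ (A B : Finset ℕ) (ε η : ℕ → 𝕜), A.card ≤ B.card → IsSign ε A → IsSign η B →
    bs.N (bs.indSign ε A) ≤ D * bs.N (bs.indSign η B)

/-- `A < B`, i.e. every element of `A` is smaller than every element of `B`. -/
def FinsetBefore (A B : Finset ℕ) : Prop := ∀ a ∈ A, ∀ b ∈ B, a < b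

open scoped Classical in
/-- `sgn z = z/|z|` (with the convention `sgn 0 = 1`). -/
def sgn (z : 𝕜) : 𝕜 := if z = 0 then 1 else z / ((‖z‖ : ℝ) : 𝕜)

end PBasis

namespace PBasis

open Finset in
private lemma exists_topk (v : ℕ → ℝ) (S : Finset ℕ) :
    ∀ k ≤ S.card, ∃ D ⊆ S, D.card = k ∧ ∀ n ∈ D, ∀ m ∈ S, m ∉ D → v m ≤ v n := by
  intro k
  induction k with
  | zero => intro _; exact ⟨∅, Finset.empty_subset _, rfl, by simp⟩
  | succ k ih =>
    intro hk
    obtain ⟨D, hDS, hcard, htop⟩ := ih (Nat.le_of_succ_le hk)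
    have hne : (S \ D).Nonempty := by
      rw [← Finset.card_pos, Finset.card_sdiff_of_subset hDS]; omega
    obtain ⟨x, hx, hmax⟩ := Finset.exists_max_image (S \ D) v hne
    have hxS := (Finset.mem_sdiff.mp hx).1
    have hxD := (Finset.mem_sdiff.mp hx).2
    refine ⟨insert x D, Finset.insert_subset hxS hDS,
      by rw [Finset.card_insert_of_notMem hxD, hcard], ?_⟩
    intro n hn m hm hmn
    rcases Finset.mem_insert.mp hn with rfl | hn
    · exact hmax m (Finset.mem_sdiff.mpr ⟨hm, fun h => hmn (Finset.mem_insert_of_mem h)⟩)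
    · exact htop n hn m hm fun h => hmn (Finset.mem_insert_of_mem h)

variable {𝕜 : Type*} [RCLike 𝕜] {X : Type*} [AddCommGroup X] [Module 𝕜 X] {p : ℝ}
variable (bs : PBasis 𝕜 X p)

private lemma N_zero : bs.N 0 = 0 := (bs.N_eq_zero_iff 0).mpr rfl

private lemma N_neg (f : X) : bs.N (-f) = bs.N f := by
  have h := bs.N_smul (-1) f
  rw [neg_one_smul] at h
  simpa using h

private lemma N_real_smul (r : ℝ) (f : X) : bs.N (((r : ℝ) : 𝕜) • f) = |r| * bs.N f := by
  rw [bs.N_smul, RCLike.norm_ofReal]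

private lemma N_sum_le (hp : 0 < p) {ι : Type*} (s : Finset ι) (g : ι → X) :
    bs.N (∑ i ∈ s, g i) ^ p ≤ ∑ i ∈ s, bs.N (g i) ^ p := by
  classical
  induction s using Finset.cons_induction with
  | empty => simp [bs.N_zero, Real.zero_rpow hp.ne']
  | cons a s ha ih =>
    rw [Finset.sum_cons, Finset.sum_cons]
    exact le_trans (bs.N_padd _ _) (by linarith)

private lemma rpow_root {x y : ℝ} (hp : 0 < p) (hx : 0 ≤ x) (hy : 0 ≤ y)
    (h : x ^ p ≤ y) : x ≤ y ^ (1 / p) := by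
  rw [one_div]
  calc x = (x ^ p) ^ p⁻¹ := (Real.rpow_rpow_inv hx hp.ne').symm
    _ ≤ y ^ p⁻¹ := Real.rpow_le_rpow (Real.rpow_nonneg hx p) h (by positivity)

private lemma rpow_root_cancel {x : ℝ} (hp : 0 < p) (hx : 0 ≤ x) : (x ^ p) ^ (1 / p) = x := by
  rw [one_div]; exact Real.rpow_rpow_inv hx hp.ne'

private lemma coord_ind (n : ℕ) (B : Finset ℕ) :
    bs.coord n (bs.ind B) = if n ∈ B then 1 else 0 := by
  classical
  rw [ind, map_sum]
  simp only [bs.biorth]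
  exact Finset.sum_ite_eq B n fun _ => (1 : 𝕜)

private lemma coord_indSign (ε : ℕ → 𝕜) (n : ℕ) (B : Finset ℕ) :
    bs.coord n (bs.indSign ε B) = if n ∈ B then ε n else 0 := by
  classical
  rw [indSign, map_sum]
  simp only [map_smul, bs.biorth, smul_eq_mul, mul_ite, mul_one, mul_zero]
  exact Finset.sum_ite_eq B n ε

private lemma coord_proj (n : ℕ) (U : Finset ℕ) (f : X) :
    bs.coord n (bs.proj U f) = if n ∈ U then bs.coord n f else 0 := by
  classical
  rw [proj, map_sum]
  simp only [map_smul, bs.biorth, smul_eq_mul, mul_ite, mul_one, mul_zero]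
  exact Finset.sum_ite_eq U n fun j => bs.coord j f

private lemma proj_add (D : Finset ℕ) (x y : X) :
    bs.proj D (x + y) = bs.proj D x + bs.proj D y := by
  simp [proj, map_add, add_smul, Finset.sum_add_distrib]

private lemma proj_sub (D : Finset ℕ) (x y : X) :
    bs.proj D (x - y) = bs.proj D x - bs.proj D y := by
  simp [proj, map_sub, sub_smul, Finset.sum_sub_distrib]

private lemma proj_smul (D : Finset ℕ) (c : 𝕜) (x : X) :
    bs.proj D (c • x) = c • bs.proj D x := by
  simp [proj, map_smul, Finset.smul_sum, smul_smul]

private lemma minCoef_le {D : Finset ℕ} {f : X} {n : ℕ} (hn : n ∈ D) :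
    bs.minCoef f D ≤ ‖bs.coord n f‖ :=
  csInf_le (Set.Finite.bddBelow ((D.finite_toSet).image _)) ⟨n, hn, rfl⟩

private lemma exists_minCoef {D : Finset ℕ} (hD : D.Nonempty) (f : X) :
    ∃ n ∈ D, bs.minCoef f D = ‖bs.coord n f‖ := by
  obtain ⟨n0, hn0⟩ := hD
  have hne : ((fun n => ‖bs.coord n f‖) '' (D : Set ℕ)).Nonempty :=
    ⟨‖bs.coord n0 f‖, n0, hn0, rfl⟩
  have hmem := hne.csInf_mem ((D.finite_toSet).image _)
  obtain ⟨n, hn, hn'⟩ := hmem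
  exact ⟨n, hn, hn'.symm⟩

private lemma minCoef_congr {D : Finset ℕ} {f g : X}
    (h : ∀ n ∈ D, ‖bs.coord n f‖ = ‖bs.coord n g‖) :
    bs.minCoef f D = bs.minCoef g D := by
  unfold minCoef
  congr 1
  exact Set.image_congr fun n hn => h n hn

private lemma coord_finite_support {g : X} (hg : g ∈ Submodule.span 𝕜 (Set.range bs.e)) :
    ∃ F : Finset ℕ, ∀ n ∉ F, bs.coord n g = 0 := by
  induction hg using Submodule.span_induction with
  | mem x hx =>
    obtain ⟨j, rfl⟩ := hx
    refine ⟨{j}, fun n hn => ?_⟩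
    rw [bs.biorth]
    simp only [Finset.mem_singleton] at hn
    simp [hn]
  | zero => exact ⟨∅, fun n _ => by simp⟩
  | add x y hx hy ihx ihy =>
    obtain ⟨F1, h1⟩ := ihx; obtain ⟨F2, h2⟩ := ihy
    refine ⟨F1 ∪ F2, fun n hn => ?_⟩
    rw [map_add, h1 n fun h => hn (Finset.mem_union_left _ h),
      h2 n fun h => hn (Finset.mem_union_right _ h), add_zero]
  | smul a x hx ihx =>
    obtain ⟨F, hF⟩ := ihx
    exact ⟨F, fun n hn => by rw [map_smul, hF n hn, smul_eq_mul, mul_zero]⟩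

private lemma coord_small (f : X) {η : ℝ} (hη : 0 < η) :
    ∃ n₀ : ℕ, ∀ n, n₀ ≤ n → ‖bs.coord n f‖ < η := by
  obtain ⟨c, hc⟩ := bs.coord_bdd
  set c' := max c 1 with hc'def
  have hc'pos : (0:ℝ) < c' := lt_of_lt_of_le one_pos (le_max_right _ _)
  obtain ⟨g, hg, hfg⟩ := bs.dense_span f (η / (2 * c')) (by positivity)
  obtain ⟨F, hF⟩ := bs.coord_finite_support hg
  refine ⟨F.sup id + 1, fun n hn => ?_⟩
  have hnF : n ∉ F := fun h => by
    have := Finset.le_sup (f := id) h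
    simp only [id] at this; omega
  have heq : bs.coord n f = bs.coord n (f - g) := by rw [map_sub, hF n hnF, sub_zero]
  have hkey : c' * (η / (2 * c')) = η / 2 := by field_simp
  calc ‖bs.coord n f‖ = ‖bs.coord n (f - g)‖ := by rw [heq]
    _ ≤ c * bs.N (f - g) := hc n _
    _ ≤ c' * bs.N (f - g) := mul_le_mul_of_nonneg_right (le_max_left _ _) (bs.N_nonneg _)
    _ < c' * (η / (2 * c')) := by
        exact mul_lt_mul_of_pos_left hfg hc'pos
    _ < η := by rw [hkey]; linarith

end PBasis
namespace PBasis

variable {𝕜 : Type*} [RCLike 𝕜] {X : Type*} [AddCommGroup X] [Module 𝕜 X] {p : ℝ}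
variable (bs : PBasis 𝕜 X p)

/-- Comparison of unsigned indicator sums over separated sets, from condition (v). -/
private lemma lemA {C : ℝ} (hC : 0 < C)
    (h : ∀ (f : X) (A B : Finset ℕ), bs.IsGreedySet f A → B.card = A.card →
      (PBasis.FinsetBefore A B ∨ PBasis.FinsetBefore B A) →
      bs.N (f - bs.proj A f) ≤ C * bs.N (f - ((bs.minCoef f A : ℝ) : 𝕜) • bs.ind B))
    (A' U' : Finset ℕ) (hd : Disjoint A' U') (hcard : U'.card = A'.card)
    (hb : PBasis.FinsetBefore A' U') :
    bs.N (bs.ind A') ≤ C * bs.N (bs.ind U') := by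
  rcases A'.eq_empty_or_nonempty with rfl | hA'ne
  · have hU' : U' = ∅ := Finset.card_eq_zero.mp (by simpa using hcard)
    subst hU'
    simp [ind, bs.N_zero]
  have hU'ne : U'.Nonempty := Finset.card_pos.mp (by rw [hcard]; exact Finset.card_pos.mpr hA'ne)
  set g := bs.ind A' + bs.ind U' with hg
  have hcoordg : ∀ n, bs.coord n g =
      (if n ∈ A' then 1 else 0) + (if n ∈ U' then 1 else 0) := by
    intro n; rw [hg, map_add, bs.coord_ind, bs.coord_ind]
  have hgU : ∀ n ∈ U', bs.coord n g = 1 := by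
    intro n hn
    rw [hcoordg, if_pos hn, if_neg (fun hA => Finset.disjoint_left.mp hd hA hn), zero_add]
  have hgreedy : bs.IsGreedySet g U' := by
    intro n hn m hm
    rw [hgU n hn, norm_one, hcoordg, if_neg hm, add_zero]
    split
    · rw [norm_one]
    · rw [norm_zero]; exact zero_le_one
  have hmin : bs.minCoef g U' = 1 := by
    obtain ⟨n, hn, hmin⟩ := bs.exists_minCoef hU'ne g
    rw [hmin, hgU n hn, norm_one]
  have hproj : bs.proj U' g = bs.ind U' := by
    rw [proj]
    refine Finset.sum_congr rfl fun n hn => ?_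
    rw [hgU n hn, one_smul]
  have h1 := h g U' A' hgreedy hcard.symm (Or.inr hb)
  rw [hproj, hmin] at h1
  have e1 : g - bs.ind U' = bs.ind A' := by rw [hg]; abel
  have e2 : g - ((1 : ℝ) : 𝕜) • bs.ind A' = bs.ind U' := by
    rw [hg, RCLike.ofReal_one, one_smul]; abel
  rwa [e1, e2] at h1

/-- The key estimate: `‖𝟙_U‖ ≤ 2^{1/p-1} C ‖f'‖` for a far block `U`. -/
private lemma stepU (hp : 0 < p) {C : ℝ} (hC : 0 < C)
    (h : ∀ (f : X) (A B : Finset ℕ), bs.IsGreedySet f A → B.card = A.card →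
      (PBasis.FinsetBefore A B ∨ PBasis.FinsetBefore B A) →
      bs.N (f - bs.proj A f) ≤ C * bs.N (f - ((bs.minCoef f A : ℝ) : 𝕜) • bs.ind B))
    (U D : Finset ℕ) (f' : X) (hDne : D.Nonempty) (hcard : U.card = D.card)
    (hDU : Disjoint D U) (hbefore : PBasis.FinsetBefore D U)
    (hU0 : ∀ n ∈ U, bs.coord n f' = 0)
    (hD1 : ∀ n ∈ D, 1 ≤ ‖bs.coord n f'‖)
    (hgreedy : bs.IsGreedySet f' D) :
    bs.N (bs.ind U) ≤ 2 ^ (1 / p - 1) * C * bs.N f' := by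
  classical
  set α := bs.minCoef f' D with hα
  obtain ⟨n₀, hn₀D, hn₀⟩ := bs.exists_minCoef hDne f'
  have hα1 : 1 ≤ α := by rw [hα, hn₀]; exact hD1 n₀ hn₀D
  have hα0 : 0 ≤ α := le_trans zero_le_one hα1
  have hαle : ∀ n ∈ D, α ≤ ‖bs.coord n f'‖ := fun n hn => bs.minCoef_le hn
  set u := ((α : ℝ) : 𝕜) • bs.ind U with hu
  have hnormα : ‖((α : ℝ) : 𝕜)‖ = α := by rw [RCLike.norm_ofReal, abs_of_nonneg hα0]
  have hcoordu : ∀ n, bs.coord n u = if n ∈ U then ((α : ℝ) : 𝕜) else 0 := by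
    intro n
    rw [hu, map_smul, bs.coord_ind, smul_eq_mul, mul_ite, mul_one, mul_zero]
  have hprojDu : bs.proj D u = 0 := by
    refine Finset.sum_eq_zero fun n hn => ?_
    rw [hcoordu, if_neg (Finset.disjoint_left.mp hDU hn), zero_smul]
  -- gP := f' + u
  have hgPcoord : ∀ n, bs.coord n (f' + u) =
      if n ∈ U then ((α : ℝ) : 𝕜) else bs.coord n f' := by
    intro n
    rw [map_add, hcoordu]
    split
    · rename_i hn; rw [hU0 n hn, zero_add]
    · rw [add_zero]
  have hDnotU : ∀ n ∈ D, n ∉ U := fun n hn => Finset.disjoint_left.mp hDU hn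
  have hgPD : ∀ n ∈ D, bs.coord n (f' + u) = bs.coord n f' := by
    intro n hn; rw [hgPcoord, if_neg (hDnotU n hn)]
  have hgreedyP : bs.IsGreedySet (f' + u) D := by
    intro n hn m hm
    rw [hgPD n hn, hgPcoord m]
    split
    · rw [hnormα]; exact hαle n hn
    · exact hgreedy n hn m hm
  have hminP : bs.minCoef (f' + u) D = α := by
    rw [hα]; exact bs.minCoef_congr fun n hn => by rw [hgPD n hn]
  have hprojP : bs.proj D (f' + u) = bs.proj D f' := by
    rw [bs.proj_add, hprojDu, add_zero]
  have h1 := h (f' + u) D U hgreedyP hcard (Or.inl hbefore)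
  rw [hprojP, hminP] at h1
  have e1 : f' + u - ((α : ℝ) : 𝕜) • bs.ind U = f' := by rw [← hu]; abel
  rw [e1] at h1
  -- h1 : bs.N (f' + u - bs.proj D f') ≤ C * bs.N f'
  -- gM := u - f'
  have hgMcoord : ∀ n, bs.coord n (u - f') =
      if n ∈ U then ((α : ℝ) : 𝕜) else -bs.coord n f' := by
    intro n
    rw [map_sub, hcoordu]
    split
    · rename_i hn; rw [hU0 n hn, sub_zero]
    · rw [zero_sub]
  have hgMD : ∀ n ∈ D, ‖bs.coord n (u - f')‖ = ‖bs.coord n f'‖ := by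
    intro n hn; rw [hgMcoord, if_neg (hDnotU n hn), norm_neg]
  have hgreedyM : bs.IsGreedySet (u - f') D := by
    intro n hn m hm
    rw [hgMD n hn, hgMcoord m]
    split
    · rw [hnormα]; exact hαle n hn
    · rw [norm_neg]; exact hgreedy n hn m hm
  have hminM : bs.minCoef (u - f') D = α := by
    rw [hα]; exact bs.minCoef_congr hgMD
  have hprojM : bs.proj D (u - f') = -bs.proj D f' := by
    rw [bs.proj_sub, hprojDu, zero_sub]
  have h2 := h (u - f') D U hgreedyM hcard (Or.inl hbefore)
  rw [hprojM, hminM] at h2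
  have e2 : u - f' - ((α : ℝ) : 𝕜) • bs.ind U = -f' := by rw [← hu]; abel
  rw [e2, bs.N_neg] at h2
  -- h2 : bs.N (u - f' - -bs.proj D f') ≤ C * bs.N f'
  -- combine
  set v := f' - bs.proj D f' with hv
  have hv1 : bs.N (v + u) ≤ C * bs.N f' := by
    have : f' + u - bs.proj D f' = v + u := by rw [hv]; abel
    rwa [this] at h1
  have hv2 : bs.N (u - v) ≤ C * bs.N f' := by
    have : u - f' - -bs.proj D f' = u - v := by rw [hv]; abel
    rwa [this] at h2
  have huu : u + u = ((2 : ℝ) : 𝕜) • u := by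
    have : ((2 : ℝ) : 𝕜) = (2 : 𝕜) := by norm_cast
    rw [this, two_smul]
  have hNu2 : bs.N (u + u) = 2 * bs.N u := by
    rw [huu, bs.N_real_smul]; norm_num
  have hsum : (2 * bs.N u) ^ p ≤ 2 * (C * bs.N f') ^ p := by
    have e3 : u + u = (v + u) + (u - v) := by abel
    calc (2 * bs.N u) ^ p = bs.N ((v + u) + (u - v)) ^ p := by rw [← e3, hNu2]
      _ ≤ bs.N (v + u) ^ p + bs.N (u - v) ^ p := bs.N_padd _ _
      _ ≤ (C * bs.N f') ^ p + (C * bs.N f') ^ p := by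
          have g1 := Real.rpow_le_rpow (bs.N_nonneg _) hv1 hp.le
          have g2 := Real.rpow_le_rpow (bs.N_nonneg _) hv2 hp.le
          linarith
      _ = 2 * (C * bs.N f') ^ p := by ring
  have hCf0 : 0 ≤ C * bs.N f' := mul_nonneg hC.le (bs.N_nonneg _)
  have hroot : 2 * bs.N u ≤ 2 ^ (1 / p) * (C * bs.N f') := by
    have h4 := rpow_root hp (mul_nonneg (by norm_num) (bs.N_nonneg u)) (mul_nonneg (by norm_num) (Real.rpow_nonneg hCf0 p)) hsum
    have e4 : (2 * (C * bs.N f') ^ p) ^ (1 / p) = 2 ^ (1 / p) * (C * bs.N f') := by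
      rw [Real.mul_rpow (by norm_num) (Real.rpow_nonneg hCf0 p), one_div,
        Real.rpow_rpow_inv hCf0 hp.ne']
    rwa [e4] at h4
  have hNuInd : bs.N (bs.ind U) ≤ bs.N u := by
    rw [hu, bs.N_real_smul, abs_of_nonneg hα0]
    exact le_mul_of_one_le_left (bs.N_nonneg _) hα1
  have h2p : (2:ℝ) ^ (1 / p - 1) = 2 ^ (1 / p) / 2 := by
    rw [Real.rpow_sub (by norm_num : (0:ℝ) < 2), Real.rpow_one]
  rw [h2p]
  have h2pos : (0:ℝ) ≤ 2 ^ (1/p) := Real.rpow_nonneg (by norm_num) _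
  calc bs.N (bs.ind U) ≤ bs.N u := hNuInd
    _ ≤ (2 ^ (1 / p) * (C * bs.N f')) / 2 := by linarith
    _ = 2 ^ (1 / p) / 2 * C * bs.N f' := by ring

end PBasis
namespace PBasis

variable {𝕜 : Type*} [RCLike 𝕜] {X : Type*} [AddCommGroup X] [Module 𝕜 X] {p : ℝ}
variable (bs : PBasis 𝕜 X p)

private lemma one_lt_two_rpow (hp : 0 < p) : (1:ℝ) < 2 ^ p := by
  exact (Real.one_lt_rpow_iff_of_pos (by norm_num)).mpr (Or.inl ⟨by norm_num, hp⟩)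

private lemma conv_real (hp : 0 < p) (A : Finset ℕ) (M : ℝ)
    (hM : ∀ B ⊆ A, bs.N (bs.ind B) ≤ M)
    (a : ℕ → ℝ) (ha : ∀ j ∈ A, a j ∈ Set.Icc (0:ℝ) 1) :
    bs.N (∑ j ∈ A, ((a j : ℝ) : 𝕜) • bs.e j) ^ p ≤ M ^ p / (2 ^ p - 1) := by
  classical
  have hM0 : 0 ≤ M := by
    have h0 := hM ∅ (Finset.empty_subset _)
    rw [show bs.ind (∅ : Finset ℕ) = 0 from Finset.sum_empty, bs.N_zero] at h0
    exact h0
  have h2p1 : (1:ℝ) < 2 ^ p := one_lt_two_rpow hp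
  have h2ppos : (0:ℝ) < 2 ^ p := by linarith
  have h2pm : (0:ℝ) < 2 ^ p - 1 := by linarith
  set x := ((2:ℝ) ^ p)⁻¹ with hxdef
  have hx0 : (0:ℝ) ≤ x := by positivity
  have hx1 : x < 1 := inv_lt_one_of_one_lt₀ h2p1
  have hQ0 : (0:ℝ) ≤ M ^ p / (2 ^ p - 1) :=
    div_nonneg (Real.rpow_nonneg hM0 p) h2pm.le
  set E := ∑ j ∈ A, bs.N (bs.e j) ^ p with hE
  have hE0 : (0:ℝ) ≤ E :=
    Finset.sum_nonneg fun j _ => Real.rpow_nonneg (bs.N_nonneg _) p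
  have key : ∀ K : ℕ, ∀ a : ℕ → ℝ, (∀ j ∈ A, a j ∈ Set.Icc (0:ℝ) 1) →
      bs.N (∑ j ∈ A, ((a j : ℝ) : 𝕜) • bs.e j) ^ p ≤ M ^ p / (2 ^ p - 1) + x ^ K * E := by
    intro K
    induction K with
    | zero =>
      intro a ha
      have hle : bs.N (∑ j ∈ A, ((a j : ℝ) : 𝕜) • bs.e j) ^ p ≤ E := by
        refine le_trans (bs.N_sum_le hp A _) (Finset.sum_le_sum fun j hj => ?_)
        rw [bs.N_real_smul, Real.mul_rpow (abs_nonneg _) (bs.N_nonneg _)]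
        have h1 : |a j| ^ p ≤ 1 :=
          Real.rpow_le_one (abs_nonneg _)
            (abs_le.mpr ⟨by linarith [(ha j hj).1], (ha j hj).2⟩) hp.le
        calc |a j| ^ p * bs.N (bs.e j) ^ p
            ≤ 1 * bs.N (bs.e j) ^ p :=
              mul_le_mul_of_nonneg_right h1 (Real.rpow_nonneg (bs.N_nonneg _) p)
          _ = bs.N (bs.e j) ^ p := one_mul _
      rw [pow_zero, one_mul]
      linarith
    | succ K ih =>
      intro a ha
      set B1 := A.filter (fun j => (1:ℝ)/2 < a j) with hB1
      set a' := fun j => 2 * a j - (if (1:ℝ)/2 < a j then 1 else 0) with ha'def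
      have ha' : ∀ j ∈ A, a' j ∈ Set.Icc (0:ℝ) 1 := by
        intro j hj
        have h1 := (ha j hj).1; have h2 := (ha j hj).2
        by_cases hc : (1:ℝ)/2 < a j
        · simp only [ha'def, if_pos hc]; exact ⟨by linarith, by linarith⟩
        · push_neg at hc; simp only [ha'def, if_neg (not_lt.mpr hc)]
          exact ⟨by linarith, by linarith⟩
      have hid : ∑ j ∈ A, ((a j : ℝ) : 𝕜) • bs.e j
          = (((1:ℝ)/2 : ℝ) : 𝕜) • (bs.ind B1 + ∑ j ∈ A, ((a' j : ℝ) : 𝕜) • bs.e j) := by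
        rw [ind, hB1, Finset.sum_filter, smul_add, Finset.smul_sum, Finset.smul_sum,
          ← Finset.sum_add_distrib]
        refine Finset.sum_congr rfl fun j hj => ?_
        by_cases hc : (1:ℝ)/2 < a j
        · rw [if_pos hc]
          simp only [ha'def, if_pos hc, smul_smul]
          have : (((1:ℝ)/2 : ℝ) : 𝕜) • bs.e j = ((((1:ℝ)/2 : ℝ) : 𝕜) * 1) • bs.e j := by
            rw [mul_one]
          rw [this, ← add_smul]
          congr 1
          push_cast
          ring
        · rw [if_neg hc]
          simp only [ha'def, if_neg hc, smul_smul, smul_zero, zero_add]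
          congr 1
          push_cast
          ring
      rw [hid, bs.N_real_smul, abs_of_pos (by norm_num : (0:ℝ) < 1/2),
        Real.mul_rpow (by norm_num) (bs.N_nonneg _)]
      have hhalf : ((1:ℝ)/2) ^ p = x := by
        rw [hxdef, one_div, Real.inv_rpow (by norm_num : (0:ℝ) ≤ 2)]
      rw [hhalf]
      have hNadd : bs.N (bs.ind B1 + ∑ j ∈ A, ((a' j : ℝ) : 𝕜) • bs.e j) ^ p
          ≤ M ^ p + (M ^ p / (2 ^ p - 1) + x ^ K * E) := by
        refine le_trans (bs.N_padd _ _) ?_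
        have hB1M : bs.N (bs.ind B1) ^ p ≤ M ^ p :=
          Real.rpow_le_rpow (bs.N_nonneg _) (hM B1 (Finset.filter_subset _ _)) hp.le
        have hih := ih a' ha'
        linarith
      have hxQ : x * (M ^ p + M ^ p / (2 ^ p - 1)) = M ^ p / (2 ^ p - 1) := by
        rw [hxdef]
        field_simp
        ring
      calc x * bs.N (bs.ind B1 + ∑ j ∈ A, ((a' j : ℝ) : 𝕜) • bs.e j) ^ p
          ≤ x * (M ^ p + (M ^ p / (2 ^ p - 1) + x ^ K * E)) :=
            mul_le_mul_of_nonneg_left hNadd hx0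
        _ = x * (M ^ p + M ^ p / (2 ^ p - 1)) + x ^ K * x * E := by ring
        _ = M ^ p / (2 ^ p - 1) + x ^ (K + 1) * E := by rw [hxQ, pow_succ]
  have hlim : Filter.Tendsto (fun K : ℕ => M ^ p / (2 ^ p - 1) + x ^ K * E) Filter.atTop
      (nhds (M ^ p / (2 ^ p - 1))) := by
    have h1 : Filter.Tendsto (fun K : ℕ => x ^ K * E) Filter.atTop (nhds 0) := by
      have := (tendsto_pow_atTop_nhds_zero_of_lt_one hx0 hx1).mul_const E
      rwa [zero_mul] at this
    have := Filter.Tendsto.add (tendsto_const_nhds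
      (x := M ^ p / (2 ^ p - 1)) (f := Filter.atTop (α := ℕ))) h1
    rwa [add_zero] at this
  exact ge_of_tendsto' hlim fun K => key K a ha

private lemma conv_pm (hp : 0 < p) (A : Finset ℕ) (M : ℝ)
    (hM : ∀ B ⊆ A, bs.N (bs.ind B) ≤ M)
    (a : ℕ → ℝ) (ha : ∀ j ∈ A, |a j| ≤ 1) :
    bs.N (∑ j ∈ A, ((a j : ℝ) : 𝕜) • bs.e j) ^ p ≤ 2 * (M ^ p / (2 ^ p - 1)) := by
  classical
  have hid : ∑ j ∈ A, ((a j : ℝ) : 𝕜) • bs.e j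
      = (∑ j ∈ A, ((max (a j) 0 : ℝ) : 𝕜) • bs.e j)
        - ∑ j ∈ A, ((max (-a j) 0 : ℝ) : 𝕜) • bs.e j := by
    rw [← Finset.sum_sub_distrib]
    refine Finset.sum_congr rfl fun j hj => ?_
    rw [← sub_smul]
    congr 1
    rw [← RCLike.ofReal_sub]
    congr 1
    rcases le_total (a j) 0 with hc | hc
    · rw [max_eq_right hc, max_eq_left (neg_nonneg.mpr hc)]; ring
    · rw [max_eq_left hc, max_eq_right (neg_nonpos.mpr hc)]; ring
  rw [hid, sub_eq_add_neg]
  refine le_trans (bs.N_padd _ _) ?_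
  rw [bs.N_neg]
  have h1 := bs.conv_real hp A M hM (fun j => max (a j) 0) (fun j hj =>
    ⟨le_max_right _ _, max_le (le_trans (le_abs_self _) (ha j hj)) zero_le_one⟩)
  have h2 := bs.conv_real hp A M hM (fun j => max (-a j) 0) (fun j hj =>
    ⟨le_max_right _ _, max_le (le_trans (neg_le_abs _) (ha j hj)) zero_le_one⟩)
  linarith

private lemma conv_sign (hp : 0 < p) (A : Finset ℕ) (M : ℝ)
    (hM : ∀ B ⊆ A, bs.N (bs.ind B) ≤ M) (ε : ℕ → 𝕜) (hε : IsSign ε A) :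
    bs.N (bs.indSign ε A) ≤
      (if (RCLike.I : 𝕜) = 0 then (2 : ℝ) ^ (1 / p) * ((2 : ℝ) ^ p - 1) ^ (-(1 / p))
        else (4 : ℝ) ^ (1 / p) * ((2 : ℝ) ^ p - 1) ^ (-(1 / p))) * M := by
  classical
  have hM0 : 0 ≤ M := by
    have h0 := hM ∅ (Finset.empty_subset _)
    rw [show bs.ind (∅ : Finset ℕ) = 0 from Finset.sum_empty, bs.N_zero] at h0
    exact h0
  have h2p1 : (1:ℝ) < 2 ^ p := one_lt_two_rpow hp
  have h2pm : (0:ℝ) < 2 ^ p - 1 := by linarith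
  set P := ∑ j ∈ A, ((RCLike.re (ε j) : ℝ) : 𝕜) • bs.e j with hP
  set Q := ∑ j ∈ A, ((RCLike.im (ε j) : ℝ) : 𝕜) • bs.e j with hQ
  have hid : bs.indSign ε A = P + (RCLike.I : 𝕜) • Q := by
    rw [indSign, hP, hQ, Finset.smul_sum, ← Finset.sum_add_distrib]
    refine Finset.sum_congr rfl fun j hj => ?_
    rw [smul_smul, ← add_smul]
    congr 1
    rw [mul_comm]
    exact (RCLike.re_add_im (ε j)).symm
  have hPle : bs.N P ^ p ≤ 2 * (M ^ p / (2 ^ p - 1)) := by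
    rw [hP]
    exact bs.conv_pm hp A M hM _ fun j hj =>
      le_trans (RCLike.abs_re_le_norm _) (le_of_eq (hε j hj))
  have hQle : bs.N Q ^ p ≤ 2 * (M ^ p / (2 ^ p - 1)) := by
    rw [hQ]
    exact bs.conv_pm hp A M hM _ fun j hj =>
      le_trans (RCLike.abs_im_le_norm _) (le_of_eq (hε j hj))
  have extract : ∀ c : ℝ, 0 < c → bs.N (bs.indSign ε A) ^ p ≤ c * (M ^ p / (2 ^ p - 1)) →
      bs.N (bs.indSign ε A) ≤ c ^ (1/p) * ((2:ℝ) ^ p - 1) ^ (-(1/p)) * M := by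
    intro c hc hle
    have e1 : (c ^ (1/p)) ^ p = c := by rw [one_div, Real.rpow_inv_rpow hc.le hp.ne']
    have e2 : ((((2:ℝ) ^ p - 1)) ^ (-(1/p))) ^ p = ((2:ℝ) ^ p - 1)⁻¹ := by
      rw [← Real.rpow_mul h2pm.le]
      have : -(1/p) * p = -1 := by field_simp
      rw [this, Real.rpow_neg_one]
    have hrhs : (c ^ (1/p) * ((2:ℝ) ^ p - 1) ^ (-(1/p)) * M) ^ p
        = c * (M ^ p / (2 ^ p - 1)) := by
      rw [Real.mul_rpow (mul_nonneg (Real.rpow_nonneg hc.le _)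
          (Real.rpow_nonneg h2pm.le _)) hM0,
        Real.mul_rpow (Real.rpow_nonneg hc.le _) (Real.rpow_nonneg h2pm.le _),
        e1, e2, div_eq_mul_inv]
      ring
    rw [← hrhs] at hle
    refine (Real.rpow_le_rpow_iff (bs.N_nonneg _) ?_ hp).mp hle
    exact mul_nonneg (mul_nonneg (Real.rpow_nonneg hc.le _)
      (Real.rpow_nonneg h2pm.le _)) hM0
  by_cases hI : (RCLike.I : 𝕜) = 0
  · rw [if_pos hI]
    refine extract 2 (by norm_num) ?_
    rw [hid, hI, zero_smul, add_zero]
    exact hPle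
  · rw [if_neg hI]
    refine extract 4 (by norm_num) ?_
    have hIQ : bs.N ((RCLike.I : 𝕜) • Q) = bs.N Q := by
      rw [bs.N_smul, RCLike.norm_I_of_ne_zero hI, one_mul]
    calc bs.N (bs.indSign ε A) ^ p = bs.N (P + (RCLike.I : 𝕜) • Q) ^ p := by rw [hid]
      _ ≤ bs.N P ^ p + bs.N ((RCLike.I : 𝕜) • Q) ^ p := bs.N_padd _ _
      _ ≤ 2 * (M ^ p / (2 ^ p - 1)) + 2 * (M ^ p / (2 ^ p - 1)) := by
          rw [hIQ]; exact add_le_add hPle hQle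
      _ = 4 * (M ^ p / (2 ^ p - 1)) := by ring

end PBasis
open scoped Classical in
/-- If the basis satisfies the condition (v) of Theorem 1.7 with constant `C`,
then `‖𝟙_{ε,A}‖ ≤ 2^{1/p−1} B_p C² ‖f‖` whenever `f` has at least `|A|` coefficients of
modulus `≥ 1`; in particular the basis is superdemocratic with constant
`≤ 2^{1/p−1} B_p C²`, where `B_p = 2^{1/p}A_p` if `𝕜 = ℝ` and `B_p = 4^{1/p}A_p` if `𝕜 = ℂ`,
and `A_p = (2^p − 1)^{−1/p}`. -/
theorem end2_implies_superdemocratic {𝕜 : Type*} [RCLike 𝕜] {X : Type*} [AddCommGroup X]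
    [Module 𝕜 X] {p : ℝ} (hp : 0 < p) (hp1 : p ≤ 1) (bs : PBasis 𝕜 X p) (C : ℝ) (hC : 0 < C)
    (h : ∀ (f : X) (A B : Finset ℕ), bs.IsGreedySet f A → B.card = A.card →
      (PBasis.FinsetBefore A B ∨ PBasis.FinsetBefore B A) →
      bs.N (f - bs.proj A f) ≤ C * bs.N (f - ((bs.minCoef f A : ℝ) : 𝕜) • bs.ind B)) :
    (∀ (A : Finset ℕ) (ε : ℕ → 𝕜) (f : X), A.Nonempty → PBasis.IsSign ε A →
      (A.card : ℕ∞) ≤ {n : ℕ | 1 ≤ ‖bs.coord n f‖}.encard →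
      bs.N (bs.indSign ε A) ≤
        (2 : ℝ) ^ (1 / p - 1) *
          (if (RCLike.I : 𝕜) = 0 then (2 : ℝ) ^ (1 / p) * ((2 : ℝ) ^ p - 1) ^ (-(1 / p))
            else (4 : ℝ) ^ (1 / p) * ((2 : ℝ) ^ p - 1) ^ (-(1 / p))) * C ^ 2 * bs.N f) ∧
      bs.IsSuperdemocraticWith
        ((2 : ℝ) ^ (1 / p - 1) *
          (if (RCLike.I : 𝕜) = 0 then (2 : ℝ) ^ (1 / p) * ((2 : ℝ) ^ p - 1) ^ (-(1 / p))
            else (4 : ℝ) ^ (1 / p) * ((2 : ℝ) ^ p - 1) ^ (-(1 / p))) * C ^ 2) := by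
  obtain ⟨ce0, hce0⟩ := bs.e_bdd
  set ce := max ce0 1 with hce
  have hce1 : (0:ℝ) < ce := lt_of_lt_of_le one_pos (le_max_right _ _)
  have hceb : ∀ n, bs.N (bs.e n) ≤ ce := fun n => le_trans (hce0 n) (le_max_left _ _)
  have h2pow0 : (0:ℝ) ≤ (2:ℝ) ^ (1/p - 1) := Real.rpow_nonneg (by norm_num) _
  have h2pm : (0:ℝ) < (2:ℝ) ^ p - 1 := by
    have := PBasis.one_lt_two_rpow hp
    linarith
  set Bp : ℝ := (if (RCLike.I : 𝕜) = 0 then (2 : ℝ) ^ (1 / p) * ((2 : ℝ) ^ p - 1) ^ (-(1 / p))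
      else (4 : ℝ) ^ (1 / p) * ((2 : ℝ) ^ p - 1) ^ (-(1 / p))) with hBp
  have hBp0 : 0 ≤ Bp := by
    rw [hBp]
    split
    · exact mul_nonneg (Real.rpow_nonneg (by norm_num) _) (Real.rpow_nonneg h2pm.le _)
    · exact mul_nonneg (Real.rpow_nonneg (by norm_num) _) (Real.rpow_nonneg h2pm.le _)
  have main : ∀ (A : Finset ℕ) (ε : ℕ → 𝕜) (f : X), A.Nonempty → PBasis.IsSign ε A →
      (A.card : ℕ∞) ≤ {n : ℕ | 1 ≤ ‖bs.coord n f‖}.encard →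
      bs.N (bs.indSign ε A) ≤ (2 : ℝ) ^ (1 / p - 1) * Bp * C ^ 2 * bs.N f := by
    intro A ε f hAne hsign hencard
    obtain ⟨n₁, hn₁⟩ := bs.coord_small f one_pos
    set Sf : Finset ℕ := (Finset.range n₁).filter (fun n => 1 ≤ ‖bs.coord n f‖) with hSf
    have hSset : {n : ℕ | 1 ≤ ‖bs.coord n f‖} = ↑Sf := by
      ext n
      simp only [Set.mem_setOf_eq, hSf, Finset.coe_filter, Finset.mem_range, Set.mem_setOf_eq]
      constructor
      · intro hn
        refine ⟨?_, hn⟩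
        by_contra hlt
        push_neg at hlt
        exact absurd hn (not_le.mpr (hn₁ n hlt))
      · exact fun hn => hn.2
    have hcardA : A.card ≤ Sf.card := by
      rw [hSset, Set.encard_coe_eq_coe_finsetCard] at hencard
      exact_mod_cast hencard
    have hSf1 : ∀ n ∈ Sf, 1 ≤ ‖bs.coord n f‖ := fun n hn => (Finset.mem_filter.mp hn).2
    have hSfout : ∀ n, n ∉ Sf → ‖bs.coord n f‖ < 1 := by
      intro n hn
      by_cases hr : n < n₁
      · by_contra hge
        push_neg at hge
        exact hn (Finset.mem_filter.mpr ⟨Finset.mem_range.mpr hr, hge⟩)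
      · push_neg at hr
        exact hn₁ n hr
    set M := (2:ℝ) ^ (1 / p - 1) * C ^ 2 * bs.N f with hM
    have hM0 : 0 ≤ M := by
      rw [hM]
      exact mul_nonneg (mul_nonneg h2pow0 (sq_nonneg C)) (bs.N_nonneg f)
    have claimInd : ∀ A' ⊆ A, bs.N (bs.ind A') ≤ M := by
      intro A' hA'A
      rcases A'.eq_empty_or_nonempty with rfl | hA'ne
      · rw [show bs.ind (∅ : Finset ℕ) = 0 from Finset.sum_empty, bs.N_zero]
        exact hM0
      set k := A'.card with hk
      have hk1 : 1 ≤ k := Finset.card_pos.mpr hA'ne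
      have hkS : k ≤ Sf.card := le_trans (Finset.card_le_card hA'A) hcardA
      have hc00 : (0:ℝ) ≤ (2:ℝ) ^ (1/p - 1) * C ^ 2 := mul_nonneg h2pow0 (sq_nonneg C)
      have hdelta : ∀ δ : ℝ, 0 < δ →
          bs.N (bs.ind A') ^ p ≤ ((2:ℝ) ^ (1/p - 1) * C ^ 2) ^ p * (bs.N f ^ p + δ) := by
        intro δ hδ
        set η := min 1 ((δ / ((k + 1 : ℝ) * ce ^ p)) ^ (1/p)) with hη
        have hden : (0:ℝ) < (k + 1 : ℝ) * ce ^ p := by positivity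
        have hη0 : 0 < η := lt_min one_pos (Real.rpow_pos_of_pos (div_pos hδ hden) _)
        have hηp : (k:ℝ) * (η ^ p * ce ^ p) ≤ δ := by
          have h1 : η ^ p ≤ δ / ((k + 1 : ℝ) * ce ^ p) := by
            have h2 : η ≤ (δ / ((k + 1 : ℝ) * ce ^ p)) ^ (1/p) := min_le_right _ _
            have h3 := Real.rpow_le_rpow hη0.le h2 hp.le
            rwa [one_div, Real.rpow_inv_rpow (div_pos hδ hden).le hp.ne'] at h3
          have hcep : (0:ℝ) < ce ^ p := Real.rpow_pos_of_pos hce1 _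
          have h3 : η ^ p * ce ^ p ≤ δ / (k + 1 : ℝ) := by
            have h4 := mul_le_mul_of_nonneg_right h1 hcep.le
            have e : δ / ((k + 1 : ℝ) * ce ^ p) * ce ^ p = δ / (k + 1 : ℝ) := by
              field_simp
            rwa [e] at h4
          calc (k:ℝ) * (η ^ p * ce ^ p) ≤ (k:ℝ) * (δ / (k + 1 : ℝ)) :=
              mul_le_mul_of_nonneg_left h3 (Nat.cast_nonneg k)
            _ ≤ δ := by
                rw [mul_div_assoc', div_le_iff₀ (by positivity)]
                nlinarith [Nat.cast_nonneg (α := ℝ) k, hδ.le]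
        obtain ⟨n₂, hn₂⟩ := bs.coord_small f hη0
        set n₃ := max (max n₂ n₁) (max ((A'.sup id) + 1) ((Sf.sup id) + 1)) with hn₃
        set U := Finset.Ico n₃ (n₃ + k) with hU
        have hUcard : U.card = k := by rw [hU, Nat.card_Ico]; omega
        have hUge : ∀ n ∈ U, n₃ ≤ n := fun n hn => (Finset.mem_Ico.mp hn).1
        have hA'lt : ∀ a ∈ A', ∀ n ∈ U, a < n := by
          intro a ha n hn
          have h1 : a ≤ A'.sup id := Finset.le_sup (f := id) ha
          have h2 := hUge n hn
          omega
        have hSflt : ∀ a ∈ Sf, ∀ n ∈ U, a < n := by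
          intro a ha n hn
          have h1 : a ≤ Sf.sup id := Finset.le_sup (f := id) ha
          have h2 := hUge n hn
          omega
        have hUsmall : ∀ n ∈ U, ‖bs.coord n f‖ < η := by
          intro n hn
          refine hn₂ n ?_
          have := hUge n hn
          omega
        have hdisjA' : Disjoint A' U := Finset.disjoint_left.mpr fun a ha hu =>
          lt_irrefl a (hA'lt a ha a hu)
        have hdisjSf : Disjoint Sf U := Finset.disjoint_left.mpr fun a ha hu =>
          lt_irrefl a (hSflt a ha a hu)
        set f' := f - bs.proj U f with hf'
        have hcoordf' : ∀ n, bs.coord n f' = if n ∈ U then 0 else bs.coord n f := by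
          intro n
          rw [hf', map_sub, bs.coord_proj]
          split
          · rw [sub_self]
          · rw [sub_zero]
        have hNf' : bs.N f' ^ p ≤ bs.N f ^ p + δ := by
          have h1 : bs.N f' ^ p ≤ bs.N f ^ p + bs.N (bs.proj U f) ^ p := by
            have e1 : f' = f + -(bs.proj U f) := by rw [hf']; abel
            calc bs.N f' ^ p = bs.N (f + -(bs.proj U f)) ^ p := by rw [← e1]
              _ ≤ bs.N f ^ p + bs.N (-(bs.proj U f)) ^ p := bs.N_padd _ _
              _ = bs.N f ^ p + bs.N (bs.proj U f) ^ p := by rw [bs.N_neg]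
          have h2 : bs.N (bs.proj U f) ^ p ≤ δ := by
            refine le_trans (bs.N_sum_le hp U _) ?_
            have hterm : ∀ n ∈ U, bs.N (bs.coord n f • bs.e n) ^ p ≤ η ^ p * ce ^ p := by
              intro n hn
              rw [bs.N_smul, Real.mul_rpow (norm_nonneg _) (bs.N_nonneg _)]
              exact mul_le_mul (Real.rpow_le_rpow (norm_nonneg _) (hUsmall n hn).le hp.le)
                (Real.rpow_le_rpow (bs.N_nonneg _) (hceb n) hp.le)
                (Real.rpow_nonneg (bs.N_nonneg _) _) (Real.rpow_nonneg hη0.le _)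
            calc ∑ n ∈ U, bs.N (bs.coord n f • bs.e n) ^ p
                ≤ ∑ n ∈ U, η ^ p * ce ^ p := Finset.sum_le_sum hterm
              _ = (k:ℝ) * (η ^ p * ce ^ p) := by
                  rw [Finset.sum_const, hUcard, nsmul_eq_mul]
              _ ≤ δ := hηp
          linarith
        obtain ⟨D, hDS, hDcard, hDtop⟩ := PBasis.exists_topk (fun n => ‖bs.coord n f‖) Sf k hkS
        have hDne : D.Nonempty := Finset.card_pos.mp (by rw [hDcard]; exact hk1)
        have hDU : Disjoint D U := Finset.disjoint_of_subset_left hDS hdisjSf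
        have hDnotU : ∀ n ∈ D, n ∉ U := fun n hn => Finset.disjoint_left.mp hDU hn
        have hcoordD : ∀ n ∈ D, bs.coord n f' = bs.coord n f := by
          intro n hn
          rw [hcoordf', if_neg (hDnotU n hn)]
        have hU0 : ∀ n ∈ U, bs.coord n f' = 0 := fun n hn => by rw [hcoordf', if_pos hn]
        have hD1 : ∀ n ∈ D, 1 ≤ ‖bs.coord n f'‖ := by
          intro n hn
          rw [hcoordD n hn]
          exact hSf1 n (hDS hn)
        have hgreedy : bs.IsGreedySet f' D := by
          intro n hn m hm
          rw [hcoordD n hn]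
          by_cases hmU : m ∈ U
          · rw [hcoordf' m, if_pos hmU, norm_zero]
            exact norm_nonneg _
          · rw [hcoordf' m, if_neg hmU]
            by_cases hmS : m ∈ Sf
            · exact hDtop n hn m hmS hm
            · exact le_trans (hSfout m hmS).le (hSf1 n (hDS hn))
        have hbeforeD : PBasis.FinsetBefore D U := fun a ha n hn => hSflt a (hDS ha) n hn
        have hstep := bs.stepU hp hC h U D f' hDne (by rw [hUcard, hDcard]) hDU hbeforeD
          hU0 hD1 hgreedy
        have hlemA := bs.lemA hC h A' U hdisjA' (by rw [hUcard])
          (fun a ha n hn => hA'lt a ha n hn)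
        have hcomb : bs.N (bs.ind A') ≤ (2:ℝ) ^ (1/p - 1) * C ^ 2 * bs.N f' := by
          calc bs.N (bs.ind A') ≤ C * bs.N (bs.ind U) := hlemA
            _ ≤ C * ((2:ℝ) ^ (1/p - 1) * C * bs.N f') := mul_le_mul_of_nonneg_left hstep hC.le
            _ = (2:ℝ) ^ (1/p - 1) * C ^ 2 * bs.N f' := by ring
        calc bs.N (bs.ind A') ^ p ≤ ((2:ℝ) ^ (1/p - 1) * C ^ 2 * bs.N f') ^ p :=
            Real.rpow_le_rpow (bs.N_nonneg _) hcomb hp.le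
          _ = ((2:ℝ) ^ (1/p - 1) * C ^ 2) ^ p * bs.N f' ^ p := by
              rw [Real.mul_rpow hc00 (bs.N_nonneg _)]
          _ ≤ ((2:ℝ) ^ (1/p - 1) * C ^ 2) ^ p * (bs.N f ^ p + δ) :=
              mul_le_mul_of_nonneg_left hNf' (Real.rpow_nonneg hc00 _)
      have hQc0 : (0:ℝ) < ((2:ℝ) ^ (1/p - 1) * C ^ 2) ^ p :=
        Real.rpow_pos_of_pos (mul_pos (Real.rpow_pos_of_pos (by norm_num) _) (pow_pos hC 2)) _
      have hfinal : bs.N (bs.ind A') ^ p ≤ ((2:ℝ) ^ (1/p - 1) * C ^ 2) ^ p * bs.N f ^ p := by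
        refine le_of_forall_pos_le_add fun ε' hε' => ?_
        have h5 := hdelta (ε' / ((2:ℝ) ^ (1/p - 1) * C ^ 2) ^ p) (div_pos hε' hQc0)
        calc bs.N (bs.ind A') ^ p
            ≤ ((2:ℝ) ^ (1/p - 1) * C ^ 2) ^ p *
              (bs.N f ^ p + ε' / ((2:ℝ) ^ (1/p - 1) * C ^ 2) ^ p) := h5
          _ = ((2:ℝ) ^ (1/p - 1) * C ^ 2) ^ p * bs.N f ^ p + ε' := by
              field_simp
      have hroot := PBasis.rpow_root hp (bs.N_nonneg (bs.ind A'))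
        (mul_nonneg hQc0.le (Real.rpow_nonneg (bs.N_nonneg f) _)) hfinal
      have e5 : (((2:ℝ) ^ (1/p - 1) * C ^ 2) ^ p * bs.N f ^ p) ^ (1/p) = M := by
        rw [Real.mul_rpow (Real.rpow_nonneg hc00 _) (Real.rpow_nonneg (bs.N_nonneg f) _),
          PBasis.rpow_root_cancel hp hc00, PBasis.rpow_root_cancel hp (bs.N_nonneg f), hM]
      rwa [e5] at hroot
    have hconv := bs.conv_sign hp A M claimInd ε hsign
    rw [← hBp] at hconv
    calc bs.N (bs.indSign ε A) ≤ Bp * M := hconv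
      _ = 2 ^ (1 / p - 1) * Bp * C ^ 2 * bs.N f := by rw [hM]; ring
  refine ⟨main, ?_⟩
  intro A B ε η hcard hsA hsB
  rcases A.eq_empty_or_nonempty with rfl | hAne
  · rw [show bs.indSign ε (∅ : Finset ℕ) = 0 from Finset.sum_empty, bs.N_zero]
    exact mul_nonneg (mul_nonneg (mul_nonneg h2pow0 hBp0) (sq_nonneg C)) (bs.N_nonneg _)
  · refine main A ε (bs.indSign η B) hAne hsA ?_
    have hsub : (↑B : Set ℕ) ⊆ {n : ℕ | 1 ≤ ‖bs.coord n (bs.indSign η B)‖} := by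
      intro n hn
      have hnB : n ∈ B := by exact_mod_cast hn
      simp only [Set.mem_setOf_eq]
      rw [bs.coord_indSign, if_pos hnB, hsB n hnB]
    calc (A.card : ℕ∞) ≤ (B.card : ℕ∞) := by exact_mod_cast hcard
      _ = (↑B : Set ℕ).encard := (Set.encard_coe_eq_coe_finsetCard B).symm
      _ ≤ _ := Set.encard_mono hsub
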